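/- For integers $p \ge 2$ and $r \ge p$, $\sum_{\substack{b_1,\dots,b_p \ge 1 \\ b_1+\cdots+b_p = r}} \prod_{t=1}^p \frac{1}{b_t^2} \le \frac{(5.3)^{p-1}}{r^2}$. -/

import Mathlib

open Finset Real

/-- Partial sums of `1/t^2` are at most `π^2/6`. -/
private lemma basel_partial (s : Finset ℕ) : ∑ t ∈ s, (1 : ℝ) / (t : ℝ) ^ 2 ≤ π ^ 2 / 6 :=
  sum_le_hasSum s (fun i _ => by positivity) hasSum_zeta_two

/-- Harmonic bound: `2 * H_{r-1} ≤ r` for `r ≥ 2`. -/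
private lemma harmonic_bound : ∀ r : ℕ, 2 ≤ r → 2 * ∑ t ∈ Ico 1 r, (1 : ℝ) / t ≤ r := by
  intro r hr
  induction r with
  | zero => omega
  | succ n ih =>
    rcases Nat.lt_or_ge n 2 with hn | hn
    · interval_cases n
      · omega
      · norm_num
    · rw [Finset.sum_Ico_succ_top (by omega)]
      have ihn := ih hn
      have hn1 : (1:ℝ) ≤ (n:ℝ) := by exact_mod_cast Nat.one_le_iff_ne_zero.mpr (by omega)
      have h2n : (2:ℝ) ≤ (n:ℝ) := by exact_mod_cast hn
      have : 2 * ((1:ℝ)/n) ≤ 1 := by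
        rw [mul_one_div, div_le_one (by linarith)]; linarith
      push_cast
      linarith

/-- Reflection of a sum over `Ico 1 r`. -/
private lemma sum_Ico_reflect (r : ℕ) (g : ℕ → ℝ) :
    ∑ k ∈ Ico 1 r, g (r - k) = ∑ k ∈ Ico 1 r, g k := by
  refine Finset.sum_nbij' (fun k => r - k) (fun k => r - k)
    (fun k hk => ?_) (fun k hk => ?_) (fun k hk => ?_) (fun k hk => ?_) (fun k hk => rfl) <;>
    simp only [Finset.mem_Ico] at * <;> omega

/-- Key inequality: `∑_{a+b=r} 1/(a^2 b^2) ≤ 5.3 / r^2`. -/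
private lemma key_ineq (r : ℕ) :
    ∑ x ∈ Finset.HasAntidiagonal.antidiagonal r, ((1 : ℝ) / (x.1 : ℝ) ^ 2) * ((1 : ℝ) / (x.2 : ℝ) ^ 2)
      ≤ 5.3 / (r : ℝ) ^ 2 := by
  rcases Nat.lt_or_ge r 2 with hr | hr
  · interval_cases r
    · norm_num
    · rw [show Finset.HasAntidiagonal.antidiagonal 1 = {(0,1),(1,0)} from rfl]
      norm_num
  · rw [Finset.Nat.sum_antidiagonal_eq_sum_range_succ_mk]
    have hR : (0:ℝ) < (r:ℝ) := by positivity
    -- restrict to Ico 1 r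
    have hsub : ∑ k ∈ Finset.range r.succ,
        ((1 : ℝ) / (k : ℝ) ^ 2) * ((1 : ℝ) / ((r - k : ℕ) : ℝ) ^ 2)
        = ∑ k ∈ Ico 1 r, ((1 : ℝ) / (k : ℝ) ^ 2) * ((1 : ℝ) / ((r - k : ℕ) : ℝ) ^ 2) := by
      symm
      apply Finset.sum_subset
      · intro k hk
        simp only [Finset.mem_Ico] at hk
        exact Finset.mem_range.mpr (by omega)
      · intro k hk hk'
        simp only [Finset.mem_range, Finset.mem_Ico, not_and_or, not_le, not_lt] at hk hk'
        rcases hk' with h0 | hge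
        · have hk0 : k = 0 := by omega
          rw [hk0]; norm_num
        · have hrk : r - k = 0 := by omega
          rw [hrk]; norm_num
    rw [hsub]
    -- termwise identity
    have hterm : ∀ k ∈ Ico 1 r,
        ((1 : ℝ) / (k : ℝ) ^ 2) * ((1 : ℝ) / ((r - k : ℕ) : ℝ) ^ 2)
        = (1 / (r:ℝ)^2) * ((1:ℝ)/(k:ℝ)^2) + (1 / (r:ℝ)^2) * ((1:ℝ)/((r-k:ℕ):ℝ)^2)
          + (2 / (r:ℝ)^3) * ((1:ℝ)/(k:ℝ)) + (2 / (r:ℝ)^3) * ((1:ℝ)/((r-k:ℕ):ℝ)) := by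
      intro k hk
      simp only [Finset.mem_Ico] at hk
      have hk0 : (0:ℝ) < (k:ℝ) := by exact_mod_cast Nat.lt_of_lt_of_le Nat.zero_lt_one hk.1
      have hrk0 : (0:ℝ) < ((r-k:ℕ):ℝ) := by exact_mod_cast Nat.sub_pos_of_lt hk.2
      have hsum : (k:ℝ) + ((r-k:ℕ):ℝ) = (r:ℝ) := by
        have := hk.2; push_cast [Nat.cast_sub (le_of_lt this)]; ring
      rw [← hsum]
      field_simp
      ring
    rw [Finset.sum_congr rfl hterm]
    simp only [Finset.sum_add_distrib, ← Finset.mul_sum]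
    rw [sum_Ico_reflect r (fun k => (1:ℝ)/(k:ℝ)^2), sum_Ico_reflect r (fun k => (1:ℝ)/(k:ℝ))]
    have hA := basel_partial (Ico 1 r)
    have hH := harmonic_bound r hr
    have hpi1 : π < 3.141593 := Real.pi_lt_d6
    have hpi0 : 3 < π := Real.pi_gt_three
    have hApos : (0:ℝ) ≤ ∑ t ∈ Ico 1 r, (1:ℝ)/(t:ℝ)^2 := by positivity
    have hHpos : (0:ℝ) ≤ ∑ t ∈ Ico 1 r, (1:ℝ)/(t:ℝ) := by positivity
    have hR2 : (0:ℝ) < (r:ℝ)^2 := by positivity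
    have hR3 : (0:ℝ) < (r:ℝ)^3 := by positivity
    have hpisq : π^2/6 ≤ 1.645 := by nlinarith [sq_nonneg (π - 3.141593)]
    have h1 : (1 / (r:ℝ)^2) * (∑ t ∈ Ico 1 r, (1:ℝ)/(t:ℝ)^2) ≤ (1/(r:ℝ)^2) * 1.645 := by
      apply mul_le_mul_of_nonneg_left (le_trans hA hpisq) (by positivity)
    have h2 : (2 / (r:ℝ)^3) * (∑ t ∈ Ico 1 r, (1:ℝ)/(t:ℝ)) ≤ 1/(r:ℝ)^2 := by
      rw [div_mul_eq_mul_div, div_le_div_iff₀ hR3 hR2]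
      nlinarith
    calc (1 / (r:ℝ)^2) * (∑ t ∈ Ico 1 r, (1:ℝ)/(t:ℝ)^2)
          + (1 / (r:ℝ)^2) * (∑ t ∈ Ico 1 r, (1:ℝ)/(t:ℝ)^2)
          + (2 / (r:ℝ)^3) * (∑ t ∈ Ico 1 r, (1:ℝ)/(t:ℝ))
          + (2 / (r:ℝ)^3) * (∑ t ∈ Ico 1 r, (1:ℝ)/(t:ℝ))
        ≤ (1/(r:ℝ)^2) * 1.645 + (1/(r:ℝ)^2) * 1.645 + 1/(r:ℝ)^2 + 1/(r:ℝ)^2 := by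
          linarith
      _ = 5.29 / (r:ℝ)^2 := by ring
      _ ≤ 5.3 / (r:ℝ)^2 := by gcongr <;> norm_num

/-- Recursion for sums over `antidiagonalTuple`. -/
private lemma sum_AT_succ (p r : ℕ) (f : ℕ → ℝ) :
    ∑ b ∈ Finset.Nat.antidiagonalTuple (p+1) r, ∏ t, f (b t)
      = ∑ x ∈ Finset.HasAntidiagonal.antidiagonal r,
          f x.1 * ∑ c ∈ Finset.Nat.antidiagonalTuple p x.2, ∏ t, f (c t) := by
  simp_rw [Finset.mul_sum]
  rw [Finset.sum_sigma' (Finset.HasAntidiagonal.antidiagonal r)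
    (fun x => Finset.Nat.antidiagonalTuple p x.2)
    (fun x c => f x.1 * ∏ t, f (c t))]
  refine Finset.sum_nbij' (fun b => ⟨(b 0, ∑ i, Fin.tail b i), Fin.tail b⟩)
    (fun x => Fin.cons x.1.1 x.2) ?_ ?_ ?_ ?_ ?_
  · intro b hb
    rw [Finset.Nat.mem_antidiagonalTuple, Fin.sum_univ_succ] at hb
    simp only [Finset.mem_sigma, Finset.Nat.mem_antidiagonalTuple, Finset.HasAntidiagonal.mem_antidiagonal]
    exact ⟨hb, trivial⟩
  · intro x hx
    simp only [Finset.mem_sigma, Finset.Nat.mem_antidiagonalTuple,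
      Finset.HasAntidiagonal.mem_antidiagonal] at hx
    rw [Finset.Nat.mem_antidiagonalTuple, Fin.sum_univ_succ]
    simp only [Fin.cons_zero, Fin.cons_succ]
    rw [show ∑ i : Fin p, x.2 i = x.1.2 from hx.2]
    exact hx.1
  · intro b _
    exact Fin.cons_self_tail b
  · intro x hx
    obtain ⟨⟨a, sv⟩, c⟩ := x
    simp only [Finset.mem_sigma, Finset.Nat.mem_antidiagonalTuple,
      Finset.mem_antidiagonal] at hx
    simp only [Fin.cons_zero, Fin.tail_cons]
    rw [hx.2]
  · intro b _
    rw [Fin.prod_univ_succ]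
    rfl

/-- Main bound, without positivity constraints (zero entries give zero terms). -/
private lemma main_bound : ∀ p : ℕ, 1 ≤ p → ∀ r : ℕ,
    ∑ b ∈ Finset.Nat.antidiagonalTuple p r, ∏ t, (1 : ℝ) / (b t) ^ 2
      ≤ (5.3 : ℝ) ^ (p - 1) / (r : ℝ) ^ 2 := by
  intro p
  induction p with
  | zero => omega
  | succ n ih =>
    intro _ r
    rcases Nat.lt_or_ge n 1 with hn | hn
    · have : n = 0 := by omega
      subst this
      rw [Finset.Nat.antidiagonalTuple_one, Finset.sum_singleton]
      rw [show ∀ x : Fin 1 → ℕ, (∏ t, (1:ℝ)/(x t)^2) = 1/(x 0)^2 from fun x => Fin.prod_univ_one _]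
      norm_num
    · rw [sum_AT_succ n r (fun m => (1:ℝ)/(m:ℝ)^2)]
      have step1 : ∑ x ∈ Finset.HasAntidiagonal.antidiagonal r,
          ((1:ℝ)/(x.1:ℝ)^2) * ∑ c ∈ Finset.Nat.antidiagonalTuple n x.2, ∏ t, (1:ℝ)/(c t)^2
          ≤ ∑ x ∈ Finset.HasAntidiagonal.antidiagonal r,
            ((1:ℝ)/(x.1:ℝ)^2) * ((5.3:ℝ)^(n-1) / (x.2:ℝ)^2) := by
        apply Finset.sum_le_sum
        intro x _
        exact mul_le_mul_of_nonneg_left (ih hn x.2) (by positivity)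
      have step2 : ∑ x ∈ Finset.HasAntidiagonal.antidiagonal r,
          ((1:ℝ)/(x.1:ℝ)^2) * ((5.3:ℝ)^(n-1) / (x.2:ℝ)^2)
          = (5.3:ℝ)^(n-1) * ∑ x ∈ Finset.HasAntidiagonal.antidiagonal r,
              ((1:ℝ)/(x.1:ℝ)^2) * ((1:ℝ)/(x.2:ℝ)^2) := by
        rw [Finset.mul_sum]
        apply Finset.sum_congr rfl
        intro x _
        ring
      have step3 : (5.3:ℝ)^(n-1) * ∑ x ∈ Finset.HasAntidiagonal.antidiagonal r,
            ((1:ℝ)/(x.1:ℝ)^2) * ((1:ℝ)/(x.2:ℝ)^2)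
          ≤ (5.3:ℝ)^(n-1) * (5.3 / (r:ℝ)^2) := by
        exact mul_le_mul_of_nonneg_left (key_ineq r) (by positivity)
      have hexp : (5.3:ℝ)^(n-1) * (5.3 / (r:ℝ)^2) = (5.3:ℝ)^(n+1-1) / (r:ℝ)^2 := by
        rw [show n+1-1 = (n-1)+1 by omega, pow_succ]
        ring
      calc ∑ x ∈ Finset.HasAntidiagonal.antidiagonal r,
            ((1:ℝ)/(x.1:ℝ)^2) * ∑ c ∈ Finset.Nat.antidiagonalTuple n x.2, ∏ t, (1:ℝ)/(c t)^2
          ≤ ∑ x ∈ Finset.HasAntidiagonal.antidiagonal r,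
            ((1:ℝ)/(x.1:ℝ)^2) * ((5.3:ℝ)^(n-1) / (x.2:ℝ)^2) := step1
        _ = (5.3:ℝ)^(n-1) * ∑ x ∈ Finset.HasAntidiagonal.antidiagonal r,
              ((1:ℝ)/(x.1:ℝ)^2) * ((1:ℝ)/(x.2:ℝ)^2) := step2
        _ ≤ (5.3:ℝ)^(n-1) * (5.3 / (r:ℝ)^2) := step3
        _ = (5.3:ℝ)^(n+1-1) / (r:ℝ)^2 := hexp

theorem sum_compositions_prod_inv_sq_le (p r : ℕ) (hp : 2 ≤ p) (hr : p ≤ r) :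
    ∑ b ∈ (Finset.Nat.antidiagonalTuple p r).filter (fun b => ∀ t, 1 ≤ b t),
      ∏ t, (1 : ℝ) / (b t) ^ 2 ≤ (5.3 : ℝ) ^ (p - 1) / r ^ 2 := by
  calc ∑ b ∈ (Finset.Nat.antidiagonalTuple p r).filter (fun b => ∀ t, 1 ≤ b t),
        ∏ t, (1 : ℝ) / (b t) ^ 2
      ≤ ∑ b ∈ Finset.Nat.antidiagonalTuple p r, ∏ t, (1 : ℝ) / (b t) ^ 2 := by
        apply Finset.sum_le_sum_of_subset_of_nonneg (Finset.filter_subset _ _)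
        intro b _ _
        positivity
    _ ≤ (5.3 : ℝ) ^ (p - 1) / r ^ 2 := main_bound p (by omega) r
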